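/- For any field element q ≠ 1 with q^k ≠ 1 for 1 ≤ k ≤ ℓ, and variables u_1,…,u_ℓ pairwise distinct, the symmetrization identity ∑_{σ∈S_ℓ} ∏_{1≤α<β≤ℓ} (u_{σ(α)} − q u_{σ(β)})/(u_{σ(α)} − u_{σ(β)}) = (q;q)_ℓ/(1−q)^ℓ holds. -/

import Mathlib

open Polynomial Finset

lemma basisDivisor_leadingCoeff {F : Type*} [Field F] {a b : F} (h : a ≠ b) :
    (Lagrange.basisDivisor a b).leadingCoeff = (a - b)⁻¹ := by
  rw [Lagrange.basisDivisor, Polynomial.leadingCoeff_mul, Polynomial.leadingCoeff_C,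
    Polynomial.leadingCoeff_X_sub_C, mul_one]

lemma basis_coeff {F : Type*} [Field F] {ι : Type*} [DecidableEq ι]
    (s : Finset ι) (v : ι → F) (hvs : Set.InjOn v s) {i : ι} (hi : i ∈ s) :
    (Lagrange.basis s v i).coeff (s.card - 1) = (∏ j ∈ s.erase i, (v i - v j))⁻¹ := by
  have hdeg := Lagrange.natDegree_basis hvs hi
  have h1 : (Lagrange.basis s v i).coeff (s.card - 1) = (Lagrange.basis s v i).leadingCoeff := by
    rw [Polynomial.leadingCoeff, hdeg]
  rw [h1, Lagrange.basis, Polynomial.leadingCoeff_prod, ← Finset.prod_inv_distrib]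
  apply Finset.prod_congr rfl
  intro j hj
  have hij : v i ≠ v j := fun h =>
    (Finset.ne_of_mem_erase hj) ((hvs (Finset.mem_of_mem_erase hj) hi h.symm))
  exact basisDivisor_leadingCoeff hij

lemma divided_difference {F : Type*} [Field F] {ι : Type*} [DecidableEq ι]
    (s : Finset ι) (v : ι → F) (hvs : Set.InjOn v s) (g : F[X])
    (hg : g.degree < s.card) :
    ∑ i ∈ s, g.eval (v i) * (∏ j ∈ s.erase i, (v i - v j))⁻¹ = g.coeff (s.card - 1) := by
  have h := Lagrange.eq_interpolate hvs hg
  conv_rhs => rw [h]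
  rw [Lagrange.interpolate_apply, Polynomial.finset_sum_coeff]
  apply Finset.sum_congr rfl
  intro i hi
  rw [Polynomial.coeff_C_mul, basis_coeff s v hvs hi]

lemma prod_zero_sub {F : Type*} [Field F] {ι : Type*} (s : Finset ι) (c : F) (f : ι → F) :
    ∏ j ∈ s, (0 - c * f j) = (-c) ^ s.card * ∏ j ∈ s, f j := by
  rw [← Finset.prod_const, ← Finset.prod_mul_distrib]
  exact Finset.prod_congr rfl fun j _ => by ring

lemma inner_identity {F : Type*} [Field F] {n : ℕ} (hn : 0 < n) (q : F)
    (x : Fin n → F) (hx : Function.Injective x) :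
    ∑ i : Fin n, ∏ j ∈ Finset.univ.erase i, (x i - q * x j) / (x i - x j)
      = ∑ k ∈ Finset.range n, q ^ k := by
  have hxx : ∀ {i j : Fin n}, j ≠ i → x i - x j ≠ 0 := fun h =>
    sub_ne_zero.mpr (fun he => h (hx he.symm))
  by_cases hq : q = 1
  · subst hq
    have h1 : ∀ i : Fin n, ∏ j ∈ Finset.univ.erase i, (x i - 1 * x j) / (x i - x j) = 1 := by
      intro i
      apply Finset.prod_eq_one
      intro j hj
      rw [one_mul]
      exact div_self (hxx (Finset.ne_of_mem_erase hj))
    rw [Finset.sum_congr rfl (fun i _ => h1 i)]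
    simp
  · -- main case
    set N : Polynomial F :=
      (∏ j : Fin n, (Polynomial.X - Polynomial.C (q * x j)))
        - Polynomial.C (q ^ n) * ∏ j : Fin n, (Polynomial.X - Polynomial.C (x j)) with hN
    set M : Polynomial F := N.divX with hM
    have hc0 : N.coeff 0 = 0 := by
      rw [Polynomial.coeff_zero_eq_eval_zero]
      simp only [hN, Polynomial.eval_sub, Polynomial.eval_mul, Polynomial.eval_prod,
        Polynomial.eval_sub, Polynomial.eval_X, Polynomial.eval_C]
      have h1 := prod_zero_sub (Finset.univ : Finset (Fin n)) q x
      have h2 := prod_zero_sub (Finset.univ : Finset (Fin n)) 1 x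
      simp only [Finset.card_univ, Fintype.card_fin, one_mul] at h1 h2
      rw [h1, h2, neg_pow]
      ring
    have hNM : M * Polynomial.X = N := by
      have := Polynomial.divX_mul_X_add N
      rwa [hc0, Polynomial.C_0, add_zero] at this
    have hq1 : q - 1 ≠ 0 := sub_ne_zero.mpr hq
    have h1q : (1 : F) - q ≠ 0 := fun h => hq1 (by linear_combination -h)
    have hMeval : ∀ i : Fin n, M.eval (x i)
        = (1 - q) * ∏ j ∈ Finset.univ.erase i, (x i - q * x j) := by
      intro i
      by_cases hx0 : x i = 0
      · have hcoeff1 : N.coeff 1 =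
            (∏ j ∈ Finset.univ.erase i, (0 - q * x j))
              - q ^ n * ∏ j ∈ Finset.univ.erase i, (0 - x j) := by
          have e1 : (∏ j : Fin n, (Polynomial.X - Polynomial.C (q * x j)))
              = Polynomial.X *
                ∏ j ∈ Finset.univ.erase i, (Polynomial.X - Polynomial.C (q * x j)) := by
            rw [← Finset.mul_prod_erase Finset.univ _ (Finset.mem_univ i), hx0, mul_zero,
              Polynomial.C_0, sub_zero]
          have e2 : (∏ j : Fin n, (Polynomial.X - Polynomial.C (x j)))
              = Polynomial.X *
                ∏ j ∈ Finset.univ.erase i, (Polynomial.X - Polynomial.C (x j)) := by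
            rw [← Finset.mul_prod_erase Finset.univ _ (Finset.mem_univ i), hx0,
              Polynomial.C_0, sub_zero]
          rw [hN, e1, e2, Polynomial.coeff_sub, Polynomial.coeff_C_mul]
          have c1 : (1 : ℕ) = 0 + 1 := rfl
          rw [c1, Polynomial.coeff_X_mul, Polynomial.coeff_X_mul,
            Polynomial.coeff_zero_eq_eval_zero, Polynomial.coeff_zero_eq_eval_zero]
          simp [Polynomial.eval_prod]
        have hme : M.eval (x i) = N.coeff 1 := by
          rw [hx0, ← Polynomial.coeff_zero_eq_eval_zero, hM, Polynomial.coeff_divX]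
        have p1 := prod_zero_sub (Finset.univ.erase i) q x
        have p2 := prod_zero_sub (Finset.univ.erase i) 1 x
        simp only [one_mul] at p2
        have hcard : (Finset.univ.erase i).card = n - 1 := by
          rw [Finset.card_erase_of_mem (Finset.mem_univ i), Finset.card_univ, Fintype.card_fin]
        rw [hme, hcoeff1, hx0, p1, p2, hcard]
        have hqn : q ^ n = q * q ^ (n - 1) := by
          rw [← pow_succ', Nat.sub_add_cancel hn]
        rw [hqn, neg_pow]
        ring
      · have hNeval : N.eval (x i)
            = (1 - q) * x i * ∏ j ∈ Finset.univ.erase i, (x i - q * x j) := by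
          rw [hN]
          simp only [Polynomial.eval_sub, Polynomial.eval_mul, Polynomial.eval_prod,
            Polynomial.eval_X, Polynomial.eval_C]
          have hz : ∏ j : Fin n, (x i - x j) = 0 :=
            Finset.prod_eq_zero (Finset.mem_univ i) (by simp)
          rw [hz, mul_zero, sub_zero,
            ← Finset.mul_prod_erase Finset.univ _ (Finset.mem_univ i)]
          ring
        have heq := congrArg (Polynomial.eval (x i)) hNM
        rw [Polynomial.eval_mul, Polynomial.eval_X, hNeval] at heq
        apply mul_right_cancel₀ hx0
        rw [heq]; ring
    have hdegN : N.degree ≤ (n : WithBot ℕ) := by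
      rw [hN]
      apply le_trans (Polynomial.degree_sub_le _ _)
      apply max_le
      · rw [← Lagrange.nodal_eq, Lagrange.degree_nodal, Finset.card_univ, Fintype.card_fin]
      · apply le_trans (Polynomial.degree_mul_le _ _)
        rw [← Lagrange.nodal_eq, Lagrange.degree_nodal, Finset.card_univ, Fintype.card_fin]
        calc (Polynomial.C (q ^ n)).degree + (n : WithBot ℕ) ≤ 0 + (n : WithBot ℕ) := by
              exact add_le_add_left (Polynomial.degree_C_le (a := q ^ n)) _
          _ = (n : WithBot ℕ) := zero_add _
    have hcardu : ((Finset.univ : Finset (Fin n)).card : WithBot ℕ) = (n : WithBot ℕ) := by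
      rw [Finset.card_univ, Fintype.card_fin]
    have hdegM : M.degree < ((Finset.univ : Finset (Fin n)).card : WithBot ℕ) := by
      rw [hcardu]
      by_cases hN0 : N = 0
      · rw [hM, hN0, Polynomial.divX_zero, Polynomial.degree_zero]
        exact WithBot.bot_lt_coe n
      · exact lt_of_lt_of_le (Polynomial.degree_divX_lt hN0) hdegN
    have hcM : M.coeff ((Finset.univ : Finset (Fin n)).card - 1) = 1 - q ^ n := by
      rw [Finset.card_univ, Fintype.card_fin, hM, Polynomial.coeff_divX,
        Nat.sub_add_cancel hn, hN, Polynomial.coeff_sub, Polynomial.coeff_C_mul]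
      have c1 : (∏ j : Fin n, (Polynomial.X - Polynomial.C (q * x j))).coeff n = 1 := by
        rw [← Lagrange.nodal_eq]
        have hm := Lagrange.nodal_monic (s := (Finset.univ : Finset (Fin n)))
          (v := fun j => q * x j)
        have hd : (Lagrange.nodal (Finset.univ : Finset (Fin n))
            (fun j => q * x j)).natDegree = n := by
          rw [Lagrange.natDegree_nodal, Finset.card_univ, Fintype.card_fin]
        have hc := hm.coeff_natDegree
        rw [hd] at hc
        exact hc
      have c2 : (∏ j : Fin n, (Polynomial.X - Polynomial.C (x j))).coeff n = 1 := by
        rw [← Lagrange.nodal_eq]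
        have hm := Lagrange.nodal_monic (s := (Finset.univ : Finset (Fin n))) (v := x)
        have hd : (Lagrange.nodal (Finset.univ : Finset (Fin n)) x).natDegree = n := by
          rw [Lagrange.natDegree_nodal, Finset.card_univ, Fintype.card_fin]
        have hc := hm.coeff_natDegree
        rw [hd] at hc
        exact hc
      rw [c1, c2, mul_one]
    have hDD := divided_difference Finset.univ x hx.injOn M hdegM
    rw [hcM] at hDD
    have hS : ∀ i : Fin n, ∏ j ∈ Finset.univ.erase i, (x i - q * x j) / (x i - x j)
        = (∏ j ∈ Finset.univ.erase i, (x i - q * x j))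
          * (∏ j ∈ Finset.univ.erase i, (x i - x j))⁻¹ := by
      intro i
      rw [Finset.prod_div_distrib, div_eq_mul_inv]
    have hmain : (1 - q) * ∑ i : Fin n,
        ∏ j ∈ Finset.univ.erase i, (x i - q * x j) / (x i - x j) = 1 - q ^ n := by
      rw [Finset.mul_sum, ← hDD]
      apply Finset.sum_congr rfl
      intro i _
      rw [hS i, hMeval i]
      ring
    rw [geom_sum_eq hq, eq_div_iff hq1]
    linear_combination -hmain

lemma aux_symm {F : Type*} [Field F] (q : F) :
    ∀ (ℓ : ℕ) (u : Fin ℓ → F), Function.Injective u →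
      ∑ σ : Equiv.Perm (Fin ℓ), ∏ α : Fin ℓ, ∏ β : Fin ℓ,
          (if α < β then (u (σ α) - q * u (σ β)) / (u (σ α) - u (σ β)) else 1)
        = ∏ i ∈ Finset.range ℓ, ∑ k ∈ Finset.range (i + 1), q ^ k := by
  intro ℓ
  induction ℓ with
  | zero => intro u _; simp
  | succ ℓ IH =>
    intro u hu
    set w : Fin (ℓ + 1) → Fin ℓ → F := fun p b => u (Equiv.swap 0 p b.succ) with hw
    have hwinj : ∀ p, Function.Injective (w p) := fun p =>
      hu.comp ((Equiv.injective _).comp (Fin.succ_injective _))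
    rw [← Equiv.sum_comp (Equiv.Perm.decomposeFin.symm :
      Fin (ℓ + 1) × Equiv.Perm (Fin ℓ) ≃ Equiv.Perm (Fin (ℓ + 1))), Fintype.sum_prod_type]
    have hterm : ∀ (p : Fin (ℓ + 1)) (e : Equiv.Perm (Fin ℓ)),
        (∏ α : Fin (ℓ + 1), ∏ β : Fin (ℓ + 1),
          (if α < β then
            (u (Equiv.Perm.decomposeFin.symm (p, e) α) -
              q * u (Equiv.Perm.decomposeFin.symm (p, e) β)) /
            (u (Equiv.Perm.decomposeFin.symm (p, e) α) -
              u (Equiv.Perm.decomposeFin.symm (p, e) β)) else 1))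
        = (∏ b : Fin ℓ, (u p - q * w p (e b)) / (u p - w p (e b))) *
          ∏ a : Fin ℓ, ∏ b : Fin ℓ,
            (if a < b then (w p (e a) - q * w p (e b)) / (w p (e a) - w p (e b)) else 1) := by
      intro p e
      rw [Fin.prod_univ_succ]
      congr 1
      · rw [Fin.prod_univ_succ]
        simp [Equiv.Perm.decomposeFin_symm_apply_zero,
          Equiv.Perm.decomposeFin_symm_apply_succ, Fin.succ_pos, hw]
      · apply Finset.prod_congr rfl
        intro a _
        rw [Fin.prod_univ_succ]
        have h0 : ¬ (a.succ < (0 : Fin (ℓ + 1))) := by simp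
        simp only [h0, if_false, one_mul]
        apply Finset.prod_congr rfl
        intro b _
        simp only [Fin.succ_lt_succ_iff, Equiv.Perm.decomposeFin_symm_apply_succ, hw]
    calc ∑ p : Fin (ℓ + 1), ∑ e : Equiv.Perm (Fin ℓ), (∏ α : Fin (ℓ + 1), ∏ β : Fin (ℓ + 1),
          (if α < β then
            (u (Equiv.Perm.decomposeFin.symm (p, e) α) -
              q * u (Equiv.Perm.decomposeFin.symm (p, e) β)) /
            (u (Equiv.Perm.decomposeFin.symm (p, e) α) -
              u (Equiv.Perm.decomposeFin.symm (p, e) β)) else 1))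
        = ∑ p : Fin (ℓ + 1), (∏ b : Fin ℓ, (u p - q * w p b) / (u p - w p b)) *
            ∏ i ∈ Finset.range ℓ, ∑ k ∈ Finset.range (i + 1), q ^ k := by
          apply Finset.sum_congr rfl
          intro p _
          rw [← IH (w p) (hwinj p), Finset.mul_sum]
          apply Finset.sum_congr rfl
          intro e _
          rw [hterm p e]
          congr 1
          exact Equiv.prod_comp e (fun b => (u p - q * w p b) / (u p - w p b))
      _ = ∏ i ∈ Finset.range (ℓ + 1), ∑ k ∈ Finset.range (i + 1), q ^ k := by
          rw [← Finset.sum_mul, Finset.prod_range_succ, mul_comm]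
          congr 1
          have hp : ∀ p : Fin (ℓ + 1), (∏ b : Fin ℓ, (u p - q * w p b) / (u p - w p b))
              = ∏ j ∈ Finset.univ.erase p, (u p - q * u j) / (u p - u j) := by
            intro p
            refine Finset.prod_bij' (fun b _ => Equiv.swap 0 p b.succ)
              (fun k hk => (Equiv.swap 0 p k).pred (by
                intro h0
                apply Finset.ne_of_mem_erase hk
                have := congrArg (Equiv.swap (0 : Fin (ℓ + 1)) p) h0
                rwa [Equiv.swap_apply_self, Equiv.swap_apply_left] at this))
              ?_hi ?_hj ?_li ?_ri ?_hv
            case _hi =>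
              intro b _
              apply Finset.mem_erase.mpr
              refine ⟨?_, Finset.mem_univ _⟩
              intro h
              have := congrArg (Equiv.swap (0 : Fin (ℓ + 1)) p) h
              rw [Equiv.swap_apply_self, Equiv.swap_apply_right] at this
              exact Fin.succ_ne_zero b this
            case _hj => intro k _; exact Finset.mem_univ _
            case _li =>
              intro b _
              simp [Fin.pred_succ]
            case _ri =>
              intro k _
              simp [Fin.succ_pred]
            case _hv =>
              intro b _
              rfl
          rw [Finset.sum_congr rfl (fun p _ => hp p)]
          exact inner_identity (Nat.succ_pos ℓ) q u hu




/-- the symmetrization identity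
`∑_{σ ∈ S_ℓ} ∏_{α<β} (u_{σ(α)} - q u_{σ(β)})/(u_{σ(α)} - u_{σ(β)}) = (q;q)_ℓ/(1-q)^ℓ`
for `q` with `q ≠ 1`, `q^k ≠ 1` for `1 ≤ k ≤ ℓ`, and pairwise distinct `u_1,…,u_ℓ`. -/
theorem symmetrization_identity {F : Type*} [Field F] (ℓ : ℕ) (q : F)
    (hq : q ≠ 1) (hqk : ∀ k, 1 ≤ k → k ≤ ℓ → q ^ k ≠ 1)
    (u : Fin ℓ → F) (hu : Function.Injective u) :
    ∑ σ : Equiv.Perm (Fin ℓ),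
        ∏ p ∈ Finset.univ.filter (fun p : Fin ℓ × Fin ℓ => p.1 < p.2),
          (u (σ p.1) - q * u (σ p.2)) / (u (σ p.1) - u (σ p.2))
      = (∏ i ∈ Finset.range ℓ, (1 - q ^ (i + 1))) / (1 - q) ^ ℓ := by
  have h1q : (1 : F) - q ≠ 0 := sub_ne_zero.mpr fun h => hq h.symm
  have hconv : ∀ σ : Equiv.Perm (Fin ℓ),
      (∏ p ∈ Finset.univ.filter (fun p : Fin ℓ × Fin ℓ => p.1 < p.2),
        (u (σ p.1) - q * u (σ p.2)) / (u (σ p.1) - u (σ p.2)))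
      = ∏ α : Fin ℓ, ∏ β : Fin ℓ,
          (if α < β then (u (σ α) - q * u (σ β)) / (u (σ α) - u (σ β)) else 1) := by
    intro σ
    rw [Finset.prod_filter, Fintype.prod_prod_type]
  rw [Finset.sum_congr rfl (fun σ _ => hconv σ), aux_symm q ℓ u hu,
    eq_div_iff (pow_ne_zero ℓ h1q)]
  have hfac : ∀ i : ℕ, (∑ k ∈ Finset.range (i + 1), q ^ k) * (1 - q) = 1 - q ^ (i + 1) := by
    intro i
    have := geom_sum_mul q (i + 1)
    linear_combination -this
  have hrhs : ∏ i ∈ Finset.range ℓ, (1 - q ^ (i + 1))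
      = ∏ i ∈ Finset.range ℓ, ((∑ k ∈ Finset.range (i + 1), q ^ k) * (1 - q)) :=
    Finset.prod_congr rfl fun i _ => (hfac i).symm
  rw [hrhs, Finset.prod_mul_distrib, Finset.prod_const, Finset.card_range]
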